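/- arXiv:1508.07442 — 7 statements merged into one kernel-verified Lean document; each statement's English description precedes it below -/
import Mathlib

section
/- Let E be an evolution algebra with natural basis e₁,…,e_m, V a vector space with basis e_{m+1},…,e_n, and θ : E × E → V a symmetric bilinear map with θ(eᵢ,eⱼ) = 0 for i ≠ j. Define the algebra E_θ on E ⊕ V by (x+v)⋆(y+w) = xy + θ(x,y). Then ann(E_θ) = (θ^⊥ ∩ ann(E)) ⊕ V, where θ^⊥ = {x ∈ E : θ(x,E) = 0}. -/
/-- Let `E` be an evolution algebra with natural basis `e₁,…,e_m`
(multiplication the commutative bilinear map `m`), `V` a vector space, and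
`θ : E × E → V` a symmetric bilinear map with `θ(eᵢ,eⱼ) = 0` for `i ≠ j`.
On `E_θ = E ⊕ V` define `(x+v)⋆(y+w) = xy + θ(x,y)`.  Then
`ann(E_θ) = (θ^⊥ ∩ ann(E)) ⊕ V`, i.e. an element `p = (x, v)` annihilates `E_θ`
iff `x ∈ θ^⊥ ∩ ann(E)` (the `V`-component being arbitrary). -/
theorem stmt1 {F E V : Type*} [Field F] [AddCommGroup E] [Module F E]
    [AddCommGroup V] [Module F V] {mdim : ℕ}
    (m : E →ₗ[F] E →ₗ[F] E) (hcomm : ∀ x y : E, m x y = m y x)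
    (b : Module.Basis (Fin mdim) F E) (hnat : ∀ i j : Fin mdim, i ≠ j → m (b i) (b j) = 0)
    (θ : E →ₗ[F] E →ₗ[F] V) (hθsym : ∀ x y : E, θ x y = θ y x)
    (hθnat : ∀ i j : Fin mdim, i ≠ j → θ (b i) (b j) = 0) :
    ∀ p : E × V,
      (∀ q : E × V, (m p.1 q.1, θ p.1 q.1) = (0 : E × V)) ↔
        p.1 ∈ LinearMap.ker θ ⊓ LinearMap.ker m := by
  intro p
  constructor
  · intro h
    constructor <;> apply LinearMap.ext <;> intro y <;>
      have := h (y, 0) <;> simp [Prod.ext_iff] at this <;>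
      simp [this.1, this.2]
  · rintro ⟨h1, h2⟩ q
    simp only [SetLike.mem_coe, LinearMap.mem_ker] at h1 h2
    simp [h1, h2]
end

section
/- Let E be a finite-dimensional evolution algebra over a field F with ann(E) ≠ 0. Then there exist an evolution algebra E' and a symmetric bilinear cocycle θ : E' × E' → V (V = ann(E)) vanishing on distinct natural basis elements, with θ^⊥ ∩ ann(E') = 0, such that E ≅ E'_θ and E/ann(E) ≅ E'. -/
/-- Let `E` be a finite-dimensional evolution algebra over `F`
(multiplication `m`, natural basis `b`) with `ann(E) = ker m ≠ 0`.  Then there exist an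
evolution algebra `E'` (realized on `Fin n' → F`, with multiplication `m'` and natural
basis `b'`) and a symmetric bilinear cocycle `θ : E' × E' → V` with `V = ann(E)`,
vanishing on distinct natural basis elements and with `θ^⊥ ∩ ann(E') = 0`, such that
`E ≅ E'_θ` (via `σ`) and `E / ann(E) ≅ E'` (the multiplicative surjection
`x ↦ (σ x).1` onto `E'` has kernel exactly `ann(E)`). -/
theorem stmt2 {F E : Type*} [Field F] [AddCommGroup E] [Module F E] {n : ℕ}
    (m : E →ₗ[F] E →ₗ[F] E) (hcomm : ∀ x y : E, m x y = m y x)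
    (b : Module.Basis (Fin n) F E) (hnat : ∀ i j : Fin n, i ≠ j → m (b i) (b j) = 0)
    (hann : LinearMap.ker m ≠ ⊥) :
    ∃ (n' : ℕ) (m' : (Fin n' → F) →ₗ[F] (Fin n' → F) →ₗ[F] (Fin n' → F))
      (b' : Module.Basis (Fin n') F (Fin n' → F))
      (θ : (Fin n' → F) →ₗ[F] (Fin n' → F) →ₗ[F] ↥(LinearMap.ker m)),
      (∀ x y, m' x y = m' y x) ∧
      (∀ i j : Fin n', i ≠ j → m' (b' i) (b' j) = 0) ∧
      (∀ x y, θ x y = θ y x) ∧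
      (∀ i j : Fin n', i ≠ j → θ (b' i) (b' j) = 0) ∧
      LinearMap.ker θ ⊓ LinearMap.ker m' = ⊥ ∧
      ∃ σ : E ≃ₗ[F] (Fin n' → F) × ↥(LinearMap.ker m),
        (∀ x y : E, σ (m x y) = (m' (σ x).1 (σ y).1, θ (σ x).1 (σ y).1)) ∧
        (∀ x : E, (σ x).1 = 0 ↔ x ∈ LinearMap.ker m) := by
  classical
  -- basic computation: `m x (b j) = (b.repr x j) • m (b j) (b j)`
  have key : ∀ (x : E) (j : Fin n), m x (b j) = b.repr x j • m (b j) (b j) := by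
    intro x j
    conv_lhs => rw [← b.sum_repr x]
    rw [map_sum, LinearMap.sum_apply]
    rw [Finset.sum_eq_single j]
    · rw [map_smul, LinearMap.smul_apply]
    · intro i _ hij
      rw [map_smul, LinearMap.smul_apply, hnat i j hij, smul_zero]
    · intro h
      exact absurd (Finset.mem_univ j) h
  -- membership in the annihilator
  have hker_char : ∀ x : E, x ∈ LinearMap.ker m ↔
      ∀ j : Fin n, b.repr x j • m (b j) (b j) = 0 := by
    intro x
    constructor
    · intro hx j
      rw [← key]
      rw [LinearMap.mem_ker] at hx
      rw [hx]; rfl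
    · intro h
      rw [LinearMap.mem_ker]
      apply b.ext
      intro j
      rw [key, h j, LinearMap.zero_apply]
  -- the "zero square" index set
  set Z : Set (Fin n) := {i | m (b i) (b i) = 0} with hZ
  have hK : LinearMap.ker m = Submodule.span F (b '' Z) := by
    ext x
    rw [Module.Basis.mem_span_image, hker_char]
    constructor
    · intro h j hj
      rw [Finset.mem_coe, Finsupp.mem_support_iff] at hj
      have := h j
      rcases smul_eq_zero.mp this with h1 | h2
      · exact absurd h1 hj
      · exact h2
    · intro h j
      by_cases hj : j ∈ Z
      · rw [hj, smul_zero]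
      · have : b.repr x j = 0 := by
          by_contra hne
          exact hj (h (Finsupp.mem_support_iff.mpr hne))
        rw [this, zero_smul]
  -- the complementary index set, enumerated
  set Sc : Finset (Fin n) := Finset.univ.filter (fun i => m (b i) (b i) ≠ 0) with hSc
  set n' : ℕ := Sc.card with hn'
  let e : ↥Sc ≃ Fin n' := Fintype.equivFinOfCardEq (Fintype.card_coe Sc)
  let ι : Fin n' → Fin n := fun i => ↑(e.symm i)
  have hιinj : Function.Injective ι := fun i j h => by
    apply e.symm.injective
    exact Subtype.ext h
  have hιmem : ∀ i, m (b (ι i)) (b (ι i)) ≠ 0 := by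
    intro i
    have h2 := (e.symm i).2
    simp only [hSc, Finset.mem_filter] at h2
    exact h2.2
  have hιsurj : ∀ j : Fin n, j ∉ Z → ∃ i, ι i = j := by
    intro j hj
    have hjSc : j ∈ Sc := by
      rw [hSc, Finset.mem_filter]
      exact ⟨Finset.mem_univ j, hj⟩
    exact ⟨e ⟨j, hjSc⟩, by simp [ι]⟩
  -- range of ι is the complement of Z
  have hrangeι : Set.range ι = Zᶜ := by
    ext j
    constructor
    · rintro ⟨i, rfl⟩
      exact hιmem i
    · intro hj
      exact hιsurj j hj
  -- the complement W
  let v : Fin n' → E := fun i => b (ι i)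
  have hvli : LinearIndependent F v := b.linearIndependent.comp ι hιinj
  set W : Submodule F E := Submodule.span F (Set.range v) with hW
  have hrangev : Set.range v = b '' Zᶜ := by
    have : Set.range v = b '' Set.range ι := by
      rw [← Set.range_comp]; rfl
    rw [this, hrangeι]
  have hcompl : IsCompl W (LinearMap.ker m) := by
    rw [hK, hW, hrangev]
    constructor
    · exact b.linearIndependent.disjoint_span_image disjoint_compl_left
    · have hU : Zᶜ ∪ Z = Set.univ := by
        rw [Set.union_comm]; exact Set.union_compl_self Z
      rw [codisjoint_iff, ← Submodule.span_union, ← Set.image_union, hU,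
        Set.image_univ, b.span_eq]
  let bW : Module.Basis (Fin n') F ↥W := Module.Basis.span hvli
  -- the isomorphism σ
  let σ0 : (↥W × ↥(LinearMap.ker m)) ≃ₗ[F] E :=
    Submodule.prodEquivOfIsCompl _ _ hcompl
  let σ : E ≃ₗ[F] (Fin n' → F) × ↥(LinearMap.ker m) :=
    σ0.symm.trans (bW.equivFun.prodCongr (LinearEquiv.refl F _))
  -- the lifting map
  let L : (Fin n' → F) →ₗ[F] E :=
    W.subtype ∘ₗ (bW.equivFun.symm : (Fin n' → F) ≃ₗ[F] ↥W).toLinearMap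
  have hLmem : ∀ a, L a ∈ W := fun a => (bW.equivFun.symm a).2
  have hσsymm : ∀ (a : Fin n' → F) (k : ↥(LinearMap.ker m)),
      σ.symm (a, k) = L a + (k : E) := by
    intro a k
    simp [σ, σ0, L, LinearEquiv.prodCongr_symm, LinearEquiv.prodCongr_apply]
  have hσ1 : ∀ x : E, x = L (σ x).1 + ((σ x).2 : E) := by
    intro x
    conv_lhs => rw [← σ.symm_apply_apply x]
    rw [← hσsymm (σ x).1 (σ x).2]
  -- products only depend on the W-components
  have hmul : ∀ x y : E, m x y = m (L (σ x).1) (L (σ y).1) := by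
    intro x y
    have hkx : m ((σ x).2 : E) = 0 := (σ x).2.2
    have hky : m ((σ y).2 : E) = 0 := (σ y).2.2
    conv_lhs => rw [hσ1 x, hσ1 y]
    simp only [map_add, LinearMap.add_apply, hkx, hky, LinearMap.zero_apply,
      add_zero, zero_add]
    rw [hcomm (L (σ x).1) ((σ y).2 : E), hky, LinearMap.zero_apply, add_zero]
  -- the structure maps
  let m' : (Fin n' → F) →ₗ[F] (Fin n' → F) →ₗ[F] (Fin n' → F) :=
    (m.compl₁₂ L L).compr₂
      ((LinearMap.fst F (Fin n' → F) ↥(LinearMap.ker m)) ∘ₗ (σ : E →ₗ[F] _))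
  let θ : (Fin n' → F) →ₗ[F] (Fin n' → F) →ₗ[F] ↥(LinearMap.ker m) :=
    (m.compl₁₂ L L).compr₂
      ((LinearMap.snd F (Fin n' → F) ↥(LinearMap.ker m)) ∘ₗ (σ : E →ₗ[F] _))
  have hm'app : ∀ a c, m' a c = (σ (m (L a) (L c))).1 := fun a c => rfl
  have hθapp : ∀ a c, θ a c = (σ (m (L a) (L c))).2 := fun a c => rfl
  -- the natural basis of E'
  let b' : Module.Basis (Fin n') F (Fin n' → F) := Pi.basisFun F (Fin n')
  have hLb' : ∀ i, L (b' i) = b (ι i) := by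
    intro i
    have h1 : bW.equivFun.symm (b' i) = bW i := by
      apply bW.equivFun.injective
      rw [LinearEquiv.apply_symm_apply]
      ext j
      rw [Module.Basis.equivFun_self]
      by_cases h : i = j
      · subst h; simp [b']
      · simp [b', Pi.single_apply, h, Ne.symm h]
    show (W.subtype) (bW.equivFun.symm (b' i)) = b (ι i)
    rw [h1]
    exact congrArg Subtype.val (Module.Basis.span_apply hvli i)
  -- σ of an element of W along L
  have hσL : ∀ a : Fin n' → F, σ (L a) = (a, 0) := by
    intro a
    apply σ.symm.injective
    rw [σ.symm_apply_apply, hσsymm]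
    simp
  refine ⟨n', m', b', θ, ?_, ?_, ?_, ?_, ?_, σ, ?_, ?_⟩
  · intro a c
    rw [hm'app, hm'app, hcomm]
  · intro i j hij
    rw [hm'app, hLb', hLb', hnat _ _ (fun h => hij (hιinj h)), map_zero]
    rfl
  · intro a c
    rw [hθapp, hθapp, hcomm]
  · intro i j hij
    rw [hθapp, hLb', hLb', hnat _ _ (fun h => hij (hιinj h)), map_zero]
    rfl
  · -- ker θ ⊓ ker m' = ⊥
    rw [eq_bot_iff]
    intro a ha
    rw [Submodule.mem_inf] at ha
    obtain ⟨haθ, ham⟩ := ha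
    rw [LinearMap.mem_ker] at haθ ham
    have hprod : ∀ c, m (L a) (L c) = 0 := by
      intro c
      have h1 : (σ (m (L a) (L c))).1 = 0 := by
        rw [← hm'app, ham]; rfl
      have h2 : (σ (m (L a) (L c))).2 = 0 := by
        rw [← hθapp, haθ]; rfl
      have : σ (m (L a) (L c)) = 0 := Prod.ext h1 h2
      have := congrArg σ.symm this
      rwa [σ.symm_apply_apply, map_zero] at this
    have hall : ∀ j : Fin n, m (L a) (b j) = 0 := by
      intro j
      by_cases hj : j ∈ Z
      · rw [hcomm]
        have : b j ∈ LinearMap.ker m := by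
          rw [hker_char]
          intro k
          by_cases hk : k = j
          · subst hk; rw [hj, smul_zero]
          · rw [show b.repr (b j) k = 0 by simp [Finsupp.single_apply, Ne.symm hk],
              zero_smul]
        rw [LinearMap.mem_ker] at this
        rw [this, LinearMap.zero_apply]
      · obtain ⟨i, rfl⟩ := hιsurj j hj
        rw [← hLb' i]
        exact hprod (b' i)
    have hLker : L a ∈ LinearMap.ker m := by
      rw [LinearMap.mem_ker]
      exact b.ext (fun j => by rw [hall j, LinearMap.zero_apply])
    have hLzero : L a = 0 :=
      Submodule.disjoint_def.mp hcompl.disjoint (L a) (hLmem a) hLker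
    have : σ (L a) = σ 0 := by rw [hLzero]
    rw [hσL, map_zero] at this
    rw [Submodule.mem_bot]
    exact congrArg Prod.fst this
  · intro x y
    rw [hmul x y, hm'app, hθapp]
  · intro x
    constructor
    · intro hx
      have := hσ1 x
      rw [hx, map_zero, zero_add] at this
      rw [this]
      exact (σ x).2.2
    · intro hx
      have : σ x = (0, ⟨x, hx⟩) := by
        apply σ.symm.injective
        rw [σ.symm_apply_apply, hσsymm]
        simp
      rw [this]
end

section
/- Let E be an evolution algebra, θ ∈ Z(E×E, V), and φ an automorphism of E such that θ(φ(eᵢ), φ(eⱼ)) = 0 for all i ≠ j. Define φθ by φθ(x,y) = θ(φ(x), φ(y)). Then the algebras E_{φθ} and E_θ are isomorphic. -/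
/-- Let `E` be an evolution algebra (multiplication `m`, natural basis `b`),
`θ ∈ Z(E×E, V)`, and `φ` an automorphism of `E` with `θ(φ(eᵢ), φ(eⱼ)) = 0` for `i ≠ j`.
With `φθ(x,y) = θ(φ(x), φ(y))`, the algebras `E_{φθ}` and `E_θ` (on `E ⊕ V`, products
`(x+v)(y+w) = xy + φθ(x,y)` resp. `xy + θ(x,y)`) are isomorphic. -/
theorem stmt6 {F E V : Type*} [Field F] [AddCommGroup E] [Module F E]
    [AddCommGroup V] [Module F V] {mdim : ℕ}
    (m : E →ₗ[F] E →ₗ[F] E) (hcomm : ∀ x y : E, m x y = m y x)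
    (b : Module.Basis (Fin mdim) F E) (hnat : ∀ i j : Fin mdim, i ≠ j → m (b i) (b j) = 0)
    (θ : E →ₗ[F] E →ₗ[F] V) (hθsym : ∀ x y : E, θ x y = θ y x)
    (hθnat : ∀ i j : Fin mdim, i ≠ j → θ (b i) (b j) = 0)
    (φ : E ≃ₗ[F] E) (hφ : ∀ x y : E, φ (m x y) = m (φ x) (φ y))
    (hφθ : ∀ i j : Fin mdim, i ≠ j → θ (φ (b i)) (φ (b j)) = 0) :
    ∃ σ : (E × V) ≃ₗ[F] (E × V),
      ∀ p q : E × V,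
        σ (m p.1 q.1, θ (φ p.1) (φ q.1)) = (m (σ p).1 (σ q).1, θ (σ p).1 (σ q).1) := by
  refine ⟨φ.prodCongr (LinearEquiv.refl F V), fun p q => ?_⟩
  simp [LinearEquiv.prodCongr_apply, hφ]
end

section
/- For the 2-dimensional nilpotent evolution algebra E with e₁² = e₂ (other products zero), the space B(E×E,F) of coboundaries is spanned by δ_{e₁,e₁}, and hence H(E×E,F) is 1-dimensional, spanned by the class [δ_{e₂,e₂}]. -/
/-- Multiplication of the evolution algebra `E : e₁² = e₂` on `F²`
(all other products of natural basis vectors are zero). -/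
def mulE22 {F : Type*} [Field F] : (Fin 2 → F) → (Fin 2 → F) → (Fin 2 → F) :=
  fun x y => ![0, x 0 * y 0]

lemma decomp {F : Type*} [Field F] (x : Fin 2 → F) :
    x = x 0 • (Pi.single 0 1 : Fin 2 → F) + x 1 • (Pi.single 1 1 : Fin 2 → F) := by
  funext i
  fin_cases i <;> simp [Pi.single_apply]

lemma mul_eq_smul {F : Type*} [Field F] (x y : Fin 2 → F) :
    mulE22 x y = (x 0 * y 0) • (Pi.single 1 1 : Fin 2 → F) := by
  funext i
  fin_cases i <;> simp [mulE22, Pi.single_apply]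

/-- For the 2-dimensional nilpotent evolution algebra `E` with
`e₁² = e₂`, the space `B(E×E,F)` of coboundaries `δf(x,y) = f(xy)` is spanned by
`δ_{e₁,e₁}` (the symmetric form with `δ_{e₁,e₁}(x,y) = x₀y₀`), and hence
`H(E×E,F) = Z/B` is 1-dimensional, spanned by the class `[δ_{e₂,e₂}]`
(where `δ_{e₂,e₂}(x,y) = x₁y₁` and `Z` consists of the symmetric bilinear forms
vanishing at `(e₁,e₂)`). -/
theorem stmt10 {F : Type*} [Field F]
    (δ11 δ22 : (Fin 2 → F) →ₗ[F] (Fin 2 → F) →ₗ[F] F)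
    (h11 : ∀ x y, δ11 x y = x 0 * y 0) (h22 : ∀ x y, δ22 x y = x 1 * y 1)
    (Z B : Submodule F ((Fin 2 → F) →ₗ[F] (Fin 2 → F) →ₗ[F] F))
    (hZ : ∀ θ : (Fin 2 → F) →ₗ[F] (Fin 2 → F) →ₗ[F] F, θ ∈ Z ↔
      ((∀ x y, θ x y = θ y x) ∧
        θ (Pi.single 0 1 : Fin 2 → F) (Pi.single 1 1 : Fin 2 → F) = 0))
    (hB : ∀ θ : (Fin 2 → F) →ₗ[F] (Fin 2 → F) →ₗ[F] F, θ ∈ B ↔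
      ∃ f : (Fin 2 → F) →ₗ[F] F, ∀ x y, θ x y = f (mulE22 x y))
    (hBZ : B ≤ Z) :
    B = Submodule.span F {δ11} ∧
    Module.finrank F ↥(Z.map (Submodule.mkQ (R := F) (M := (Fin 2 → F) →ₗ[F] (Fin 2 → F) →ₗ[F] F) B)) = 1 ∧
    Submodule.span F {B.mkQ δ22} = Z.map (Submodule.mkQ (R := F) (M := (Fin 2 → F) →ₗ[F] (Fin 2 → F) →ₗ[F] F) B) := by
  set e0 : Fin 2 → F := Pi.single 0 1
  set e1 : Fin 2 → F := Pi.single 1 1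
  have he0 : e0 0 = 1 ∧ e0 1 = 0 := ⟨by simp [e0], by simp [e0, Pi.single_apply]⟩
  have he1 : e1 0 = 0 ∧ e1 1 = 1 := ⟨by simp [e1, Pi.single_apply], by simp [e1]⟩
  -- B = span {δ11}
  have hδ11B : δ11 ∈ B := by
    rw [hB]
    exact ⟨LinearMap.proj 1, fun x y => by simp [h11, mulE22]⟩
  have hBspan : B = Submodule.span F {δ11} := by
    apply le_antisymm
    · intro θ hθ
      obtain ⟨f, hf⟩ := (hB θ).mp hθ
      rw [Submodule.mem_span_singleton]
      refine ⟨f e1, ?_⟩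
      refine LinearMap.ext fun x => LinearMap.ext fun y => ?_
      rw [hf, mul_eq_smul, map_smul, LinearMap.smul_apply, LinearMap.smul_apply,
        h11, smul_eq_mul, smul_eq_mul]
      ring
    · rw [Submodule.span_le, Set.singleton_subset_iff]
      exact hδ11B
  -- δ22 ∈ Z
  have hδ22Z : δ22 ∈ Z := by
    rw [hZ]
    refine ⟨fun x y => by rw [h22, h22]; ring, ?_⟩
    rw [h22, he0.2]; ring
  -- mkQ δ22 ≠ 0
  have hδ22nB : δ22 ∉ B := by
    intro h
    obtain ⟨f, hf⟩ := (hB δ22).mp h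
    have := hf e1 e1
    rw [h22, he1.2, mul_eq_smul, he1.1] at this
    simp at this
  have hne : B.mkQ δ22 ≠ 0 := by
    rw [Submodule.mkQ_apply, Ne, Submodule.Quotient.mk_eq_zero]
    exact hδ22nB
  -- decomposition of elements of Z
  have hZdecomp : ∀ θ, θ ∈ Z → θ = θ e0 e0 • δ11 + θ e1 e1 • δ22 := by
    intro θ hθ
    obtain ⟨hsym, hvan⟩ := (hZ θ).mp hθ
    have hvan' : θ e1 e0 = 0 := by rw [hsym]; exact hvan
    refine LinearMap.ext fun x => LinearMap.ext fun y => ?_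
    have hx := decomp x
    have hy := decomp y
    rw [hx, hy]
    simp only [map_add, map_smul, LinearMap.add_apply, LinearMap.smul_apply,
      smul_eq_mul, h11, h22, hvan, hvan']
    simp only [he0.1, he0.2, he1.1, he1.2, e0, e1]
    ring_nf
    simp [Pi.single_apply, show θ (Pi.single 0 1) (Pi.single 1 1) = 0 from hvan, show θ (Pi.single 1 1) (Pi.single 0 1) = 0 from hvan']
  -- span {mkQ δ22} = Z.map mkQ
  have hspan : Submodule.span F {B.mkQ δ22} = Z.map (Submodule.mkQ (R := F) (M := (Fin 2 → F) →ₗ[F] (Fin 2 → F) →ₗ[F] F) B) := by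
    apply le_antisymm
    · rw [Submodule.span_le, Set.singleton_subset_iff]
      exact ⟨δ22, hδ22Z, rfl⟩
    · rintro _ ⟨θ, hθ, rfl⟩
      rw [Submodule.mem_span_singleton]
      refine ⟨θ e1 e1, ?_⟩
      have hd := hZdecomp θ hθ
      rw [← map_smul, Submodule.mkQ_apply, Submodule.mkQ_apply, Submodule.Quotient.eq]
      have heq : θ e1 e1 • δ22 - θ = (-(θ e0 e0)) • δ11 := by
        nth_rewrite 2 [hd]
        module
      rw [heq]
      exact Submodule.smul_mem B _ hδ11B
  refine ⟨hBspan, ?_, hspan⟩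
  rw [← hspan, finrank_span_singleton hne]
end

section
/- Over an algebraically closed field F, any 3-dimensional nilpotent evolution algebra with 1-dimensional annihilator generated by e₃ and with e₁² = e₃, e₂² = e₃ is isomorphic to the algebra E_{3,3} : e₁² = e₃, e₂² = e₃ (all other basis products zero), and every automorphism φ of E_{3,3} fixes the span of e₃ and satisfies a₁₁² + a₂₁² = a₃₃, a₁₂² + a₂₂² = a₃₃, a₁₁a₁₂ + a₂₁a₂₂ = 0, where (a_{ij}) is the matrix of φ in the natural basis. -/
/-- The descending sequence of subspaces `E^⟨k+1⟩`:
`epow F mul 0 = E = E^⟨1⟩` and `epow F mul (k+1) = E^⟨k+2⟩ = E^⟨k+1⟩ · E`. -/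
def epow (F : Type*) [Field F] {E : Type*} [AddCommGroup E] [Module F E]
    (mul : E → E → E) : ℕ → Submodule F E
  | 0 => ⊤
  | k + 1 => Submodule.span F {z : E | ∃ x ∈ epow F mul k, ∃ y : E, z = mul x y}

/-- Multiplication of the evolution algebra `E₃,₃ : e₁² = e₃, e₂² = e₃` on `F³`
(all other products of natural basis vectors are zero). -/
def mulE33 {F : Type*} [Field F] : (Fin 3 → F) → (Fin 3 → F) → (Fin 3 → F) :=
  fun x y => ![0, 0, x 0 * y 0 + x 1 * y 1]

/-- Over an algebraically closed field `F`, any 3-dimensional nilpotent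
evolution algebra with 1-dimensional annihilator generated by `e₃` and with
`e₁² = e₃, e₂² = e₃` is isomorphic to `E₃,₃ : e₁² = e₃, e₂² = e₃`, and every automorphism
`φ` of `E₃,₃` fixes the span of `e₃` and satisfies `a₁₁² + a₂₁² = a₃₃`,
`a₁₂² + a₂₂² = a₃₃`, `a₁₁a₁₂ + a₂₁a₂₂ = 0`, where `(a i j)` is the matrix of `φ` in the
natural basis (column convention `φ(eⱼ) = Σᵢ a i j • eᵢ`). -/
theorem stmt11 {F E : Type*} [Field F] [IsAlgClosed F] [AddCommGroup E] [Module F E]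
    (m : E →ₗ[F] E →ₗ[F] E) (hcomm : ∀ x y : E, m x y = m y x)
    (b : Module.Basis (Fin 3) F E) (hnat : ∀ i j : Fin 3, i ≠ j → m (b i) (b j) = 0)
    (h1 : m (b 0) (b 0) = b 2) (h2 : m (b 1) (b 1) = b 2)
    (hann : LinearMap.ker m = Submodule.span F {b 2})
    (hnil : ∃ k, epow F (fun x y => m x y) k = ⊥) :
    (∃ σ : E ≃ₗ[F] (Fin 3 → F), ∀ x y : E, σ (m x y) = mulE33 (σ x) (σ y)) ∧
    ∀ φ : (Fin 3 → F) ≃ₗ[F] (Fin 3 → F),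
      (∀ x y, φ (mulE33 x y) = mulE33 (φ x) (φ y)) →
      (Submodule.span F {(Pi.single 2 1 : Fin 3 → F)}).map φ.toLinearMap =
          Submodule.span F {(Pi.single 2 1 : Fin 3 → F)} ∧
      ∀ a : Fin 3 → Fin 3 → F,
        (∀ i j : Fin 3, a i j = φ (Pi.single j 1) i) →
        (a 0 0 ^ 2 + a 1 0 ^ 2 = a 2 2 ∧
         a 0 1 ^ 2 + a 1 1 ^ 2 = a 2 2 ∧
         a 0 0 * a 0 1 + a 1 0 * a 1 1 = 0) := by
  have hm22 : m (b 2) (b 2) = 0 := by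
    have hb2 : b 2 ∈ LinearMap.ker m := by
      rw [hann]; exact Submodule.mem_span_singleton_self _
    rw [LinearMap.mem_ker] at hb2
    rw [hb2]; rfl
  constructor
  · refine ⟨b.equivFun, fun x y => ?_⟩
    have expand : m x y = (b.repr x 0 * b.repr y 0 + b.repr x 1 * b.repr y 1) • b 2 := by
      conv_lhs => rw [← b.sum_repr x, ← b.sum_repr y]
      rw [Fin.sum_univ_three, Fin.sum_univ_three]
      simp only [map_add, map_smul, LinearMap.add_apply, LinearMap.smul_apply, h1, h2, hm22,
        hnat 0 1 (by decide), hnat 0 2 (by decide), hnat 1 0 (by decide),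
        hnat 1 2 (by decide), hnat 2 0 (by decide), hnat 2 1 (by decide),
        smul_zero, add_zero, zero_add]
      module
    funext i
    rw [expand]
    fin_cases i <;>
      simp [mulE33, Module.Basis.equivFun_apply, map_smul, Module.Basis.repr_self,
        Finsupp.smul_apply, Finsupp.single_apply]
  · intro φ hφ
    set e2 : Fin 3 → F := (Pi.single 2 1 : Fin 3 → F) with he2
    have hmul_e2 : ∀ w : Fin 3 → F, mulE33 e2 w = 0 := by
      intro w
      funext i
      fin_cases i <;> simp [mulE33, he2]
    have hz : ∀ z : Fin 3 → F, mulE33 (φ e2) z = 0 := by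
      intro z
      have := hφ e2 (φ.symm z)
      rw [hmul_e2, map_zero, LinearEquiv.apply_symm_apply] at this
      exact this.symm
    have h02 : φ e2 0 = 0 := by
      have := congrFun (hz (Pi.single 0 1)) 2
      simpa [mulE33] using this
    have h12 : φ e2 1 = 0 := by
      have := congrFun (hz (Pi.single 1 1)) 2
      simpa [mulE33] using this
    have hphi_e2 : φ e2 = φ e2 2 • e2 := by
      funext i
      rw [he2] at h02 h12
      fin_cases i <;> simp [h02, h12, he2]
    have he2ne : e2 ≠ 0 := by
      intro h
      have := congrFun h 2
      simp [he2] at this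
    have hcne : φ e2 2 ≠ 0 := by
      intro h
      have h0 : φ e2 = φ 0 := by rw [map_zero, hphi_e2, h, zero_smul]
      exact he2ne (φ.injective h0)
    refine ⟨?_, ?_⟩
    · rw [Submodule.map_span, Set.image_singleton]
      show Submodule.span F {φ e2} = Submodule.span F {e2}
      rw [hphi_e2]
      exact Submodule.span_singleton_smul_eq (IsUnit.mk0 _ hcne) _
    · intro a ha
      have key : ∀ i j : Fin 3, (mulE33 (φ (Pi.single i 1)) (φ (Pi.single j 1))) 2
          = (φ (mulE33 (Pi.single i 1) (Pi.single j 1))) 2 := by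
        intro i j; rw [hφ]
      have e00 : mulE33 (Pi.single 0 1 : Fin 3 → F) (Pi.single 0 1) = e2 := by
        funext i; fin_cases i <;> simp [mulE33, he2]
      have e11 : mulE33 (Pi.single 1 1 : Fin 3 → F) (Pi.single 1 1) = e2 := by
        funext i; fin_cases i <;> simp [mulE33, he2]
      have e01 : mulE33 (Pi.single 0 1 : Fin 3 → F) (Pi.single 1 1) = 0 := by
        funext i; fin_cases i <;> simp [mulE33]
      refine ⟨?_, ?_, ?_⟩
      · have := key 0 0
        rw [e00] at this
        simp only [mulE33, Matrix.cons_val_two, Matrix.tail_cons, Matrix.head_cons] at this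
        rw [ha 0 0, ha 1 0, ha 2 2]
        show φ (Pi.single 0 1) 0 ^ 2 + φ (Pi.single 0 1) 1 ^ 2 = φ e2 2
        rw [← this]; ring
      · have := key 1 1
        rw [e11] at this
        simp only [mulE33, Matrix.cons_val_two, Matrix.tail_cons, Matrix.head_cons] at this
        rw [ha 0 1, ha 1 1, ha 2 2]
        show φ (Pi.single 1 1) 0 ^ 2 + φ (Pi.single 1 1) 1 ^ 2 = φ e2 2
        rw [← this]; ring
      · have := key 0 1
        rw [e01, map_zero] at this
        simp only [mulE33, Matrix.cons_val_two, Matrix.tail_cons, Matrix.head_cons] at this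
        rw [ha 0 0, ha 0 1, ha 1 0, ha 1 1]
        show φ (Pi.single 0 1) 0 * φ (Pi.single 1 1) 0
            + φ (Pi.single 0 1) 1 * φ (Pi.single 1 1) 1 = 0
        simpa using this
end

section
/- Over an algebraically closed field F, the 4-dimensional evolution algebras E_{4,7} : e₁² = e₃, e₂² = e₃, e₃² = e₄ and E_{4,8} : e₁² = e₃ + e₄, e₂² = e₃, e₃² = e₄ (all other natural-basis products zero) are both nilpotent but are not isomorphic. -/
/-- Multiplication of `E₄,₇ : e₁² = e₃, e₂² = e₃, e₃² = e₄` on `F⁴`. -/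
def mulE47 {F : Type*} [Field F] : (Fin 4 → F) → (Fin 4 → F) → (Fin 4 → F) :=
  fun x y => ![0, 0, x 0 * y 0 + x 1 * y 1, x 2 * y 2]

/-- Multiplication of `E₄,₈ : e₁² = e₃ + e₄, e₂² = e₃, e₃² = e₄` on `F⁴`. -/
def mulE48 {F : Type*} [Field F] : (Fin 4 → F) → (Fin 4 → F) → (Fin 4 → F) :=
  fun x y => ![0, 0, x 0 * y 0 + x 1 * y 1, x 0 * y 0 + x 2 * y 2]

/-- Subspace of vectors with first two coordinates zero. -/
def S1 (F : Type*) [Field F] : Submodule F (Fin 4 → F) where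
  carrier := {x | x 0 = 0 ∧ x 1 = 0}
  add_mem' := by rintro a b ⟨h1, h2⟩ ⟨h3, h4⟩; exact ⟨by simp [h1, h3], by simp [h2, h4]⟩
  zero_mem' := ⟨rfl, rfl⟩
  smul_mem' := by rintro c a ⟨h1, h2⟩; exact ⟨by simp [h1], by simp [h2]⟩

/-- Subspace of vectors with first three coordinates zero. -/
def S2 (F : Type*) [Field F] : Submodule F (Fin 4 → F) where
  carrier := {x | x 0 = 0 ∧ x 1 = 0 ∧ x 2 = 0}
  add_mem' := by
    rintro a b ⟨h1, h2, h3⟩ ⟨h4, h5, h6⟩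
    exact ⟨by simp [h1, h4], by simp [h2, h5], by simp [h3, h6]⟩
  zero_mem' := ⟨rfl, rfl, rfl⟩
  smul_mem' := by
    rintro c a ⟨h1, h2, h3⟩; exact ⟨by simp [h1], by simp [h2], by simp [h3]⟩

lemma nilp47 {F : Type*} [Field F] : epow F (mulE47 (F := F)) 3 = ⊥ := by
  have h1 : epow F (mulE47 (F := F)) 1 ≤ S1 F := by
    show Submodule.span F _ ≤ _
    rw [Submodule.span_le]
    rintro z ⟨x, -, y, rfl⟩
    exact ⟨rfl, rfl⟩
  have h2 : epow F (mulE47 (F := F)) 2 ≤ S2 F := by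
    show Submodule.span F _ ≤ _
    rw [Submodule.span_le]
    rintro z ⟨x, hx, y, rfl⟩
    obtain ⟨hx0, hx1⟩ := h1 hx
    exact ⟨rfl, rfl, by simp [mulE47, hx0, hx1]⟩
  rw [eq_bot_iff]
  show Submodule.span F _ ≤ ⊥
  rw [Submodule.span_le]
  rintro z ⟨x, hx, y, rfl⟩
  obtain ⟨hx0, hx1, hx2⟩ := h2 hx
  have : mulE47 x y = 0 := by
    funext i; fin_cases i <;> simp [mulE47, hx0, hx1, hx2]
  simp [this]

lemma nilp48 {F : Type*} [Field F] : epow F (mulE48 (F := F)) 3 = ⊥ := by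
  have h1 : epow F (mulE48 (F := F)) 1 ≤ S1 F := by
    show Submodule.span F _ ≤ _
    rw [Submodule.span_le]
    rintro z ⟨x, -, y, rfl⟩
    exact ⟨rfl, rfl⟩
  have h2 : epow F (mulE48 (F := F)) 2 ≤ S2 F := by
    show Submodule.span F _ ≤ _
    rw [Submodule.span_le]
    rintro z ⟨x, hx, y, rfl⟩
    obtain ⟨hx0, hx1⟩ := h1 hx
    exact ⟨rfl, rfl, by simp [mulE48, hx0, hx1]⟩
  rw [eq_bot_iff]
  show Submodule.span F _ ≤ ⊥
  rw [Submodule.span_le]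
  rintro z ⟨x, hx, y, rfl⟩
  obtain ⟨hx0, hx1, hx2⟩ := h2 hx
  have : mulE48 x y = 0 := by
    funext i; fin_cases i <;> simp [mulE48, hx0, hx1, hx2]
  simp [this]

/-- Over an algebraically closed field `F`, the 4-dimensional evolution
algebras `E₄,₇` and `E₄,₈` are both nilpotent but are not isomorphic. -/
theorem stmt12 {F : Type*} [Field F] [IsAlgClosed F] :
    (∃ k, epow F (mulE47 (F := F)) k = ⊥) ∧
    (∃ k, epow F (mulE48 (F := F)) k = ⊥) ∧
    ¬ ∃ σ : (Fin 4 → F) ≃ₗ[F] (Fin 4 → F),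
        ∀ x y, σ (mulE47 x y) = mulE48 (σ x) (σ y) := by
  refine ⟨⟨3, nilp47⟩, ⟨3, nilp48⟩, ?_⟩
  rintro ⟨σ, h⟩
  -- component lemmas for mulE48
  have v0 : ∀ a b : Fin 4 → F, mulE48 a b 0 = 0 := by intro a b; simp [mulE48]
  have v1 : ∀ a b : Fin 4 → F, mulE48 a b 1 = 0 := by intro a b; simp [mulE48]
  have v2 : ∀ a b : Fin 4 → F, mulE48 a b 2 = a 0 * b 0 + a 1 * b 1 := by
    intro a b; simp [mulE48]
  have v3 : ∀ a b : Fin 4 → F, mulE48 a b 3 = a 0 * b 0 + a 2 * b 2 := by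
    intro a b; simp [mulE48]
  -- natural basis vectors
  set e1 : Fin 4 → F := ![1, 0, 0, 0] with he1
  set e2 : Fin 4 → F := ![0, 1, 0, 0] with he2
  set e3 : Fin 4 → F := ![0, 0, 1, 0] with he3
  set e4 : Fin 4 → F := ![0, 0, 0, 1] with he4
  have m11 : mulE47 e1 e1 = e3 := by funext i; fin_cases i <;> simp [mulE47, he1, he3]
  have m22 : mulE47 e2 e2 = e3 := by funext i; fin_cases i <;> simp [mulE47, he2, he3]
  have m12 : mulE47 e1 e2 = 0 := by funext i; fin_cases i <;> simp [mulE47, he1, he2]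
  have m13 : mulE47 e1 e3 = 0 := by funext i; fin_cases i <;> simp [mulE47, he1, he3]
  have m23 : mulE47 e2 e3 = 0 := by funext i; fin_cases i <;> simp [mulE47, he2, he3]
  have m33 : mulE47 e3 e3 = e4 := by funext i; fin_cases i <;> simp [mulE47, he3, he4]
  set s1 : Fin 4 → F := σ e1 with hs1
  set s2 : Fin 4 → F := σ e2 with hs2
  set t : Fin 4 → F := σ e3 with ht
  -- σ e3 = (σ e1)² = (σ e2)²
  have hσ3 : t = mulE48 s1 s1 := by rw [ht, ← m11, h]
  have hσ3' : t = mulE48 s2 s2 := by rw [ht, ← m22, h]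
  have ht0 : t 0 = 0 := by rw [hσ3]; exact v0 _ _
  have ht1 : t 1 = 0 := by rw [hσ3]; exact v1 _ _
  -- σ e4 = (σ e3)²
  have hσ4 : σ e4 = mulE48 t t := by rw [← m33, h]
  have ht2 : t 2 ≠ 0 := by
    intro h0
    have hz : σ e4 = 0 := by
      rw [hσ4]; funext i; fin_cases i <;> simp [mulE48, ht0, ht1, h0]
    have he40 : e4 = 0 := σ.injective (hz.trans (map_zero σ).symm)
    have := congrFun he40 3
    simp [he4] at this
  -- e1·e3 = 0 gives s1 2 = 0; similarly s2 2 = 0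
  have hs12 : s1 2 = 0 := by
    have h3 : mulE48 s1 t 3 = 0 := by
      have h' := h e1 e3; rw [m13, map_zero] at h'
      exact (congrFun h' 3).symm
    rw [v3, ht0, mul_zero, zero_add] at h3
    rcases mul_eq_zero.1 h3 with h' | h'
    · exact h'
    · exact absurd h' ht2
  have hs22 : s2 2 = 0 := by
    have h3 : mulE48 s2 t 3 = 0 := by
      have h' := h e2 e3; rw [m23, map_zero] at h'
      exact (congrFun h' 3).symm
    rw [v3, ht0, mul_zero, zero_add] at h3
    rcases mul_eq_zero.1 h3 with h' | h'
    · exact h'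
    · exact absurd h' ht2
  -- key scalar equations
  have eq2 : t 2 = s1 0 * s1 0 + s1 1 * s1 1 := by rw [hσ3]; exact v2 _ _
  have eq2' : t 2 = s2 0 * s2 0 + s2 1 * s2 1 := by rw [hσ3']; exact v2 _ _
  have eq3 : t 3 = s1 0 * s1 0 := by
    rw [hσ3, v3, hs12, mul_zero, add_zero]
  have eq3' : t 3 = s2 0 * s2 0 := by
    rw [hσ3', v3, hs22, mul_zero, add_zero]
  -- e1·e2 = 0 gives cross equations
  have hcross : (0 : Fin 4 → F) = mulE48 s1 s2 := by
    have h' := h e1 e2; rw [m12, map_zero] at h'; exact h'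
  have c3 : s1 0 * s2 0 = 0 := by
    have h' := (congrFun hcross 3).symm
    rw [v3, hs12, zero_mul, add_zero] at h'
    exact h'
  have c2 : s1 1 * s2 1 = 0 := by
    have h' := (congrFun hcross 2).symm
    rw [v2, c3, zero_add] at h'
    exact h'
  -- derive contradiction
  have ha : s1 0 = 0 ∧ s2 0 = 0 := by
    rcases mul_eq_zero.1 c3 with h' | h'
    · refine ⟨h', ?_⟩
      have hz : s2 0 * s2 0 = 0 := by rw [← eq3', eq3, h', mul_zero]
      rcases mul_eq_zero.1 hz with h'' | h'' <;> exact h''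
    · refine ⟨?_, h'⟩
      have hz : s1 0 * s1 0 = 0 := by rw [← eq3, eq3', h', mul_zero]
      rcases mul_eq_zero.1 hz with h'' | h'' <;> exact h''
  obtain ⟨ha1, ha2⟩ := ha
  rcases mul_eq_zero.1 c2 with hb | hb
  · apply ht2; rw [eq2, ha1, hb]; ring
  · apply ht2; rw [eq2', ha2, hb]; ring
end

section
/- Over an algebraically closed field F, the 5-dimensional evolution algebras E_{5,13} : e₁² = e₂² = e₃, e₃² = e₄² = e₅ and E_{5,14} : e₁² = e₃ + e₅, e₂² = e₃, e₃² = e₄² = e₅ are not isomorphic. -/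
/-- Multiplication of `E₅,₁₃ : e₁² = e₂² = e₃, e₃² = e₄² = e₅` on `F⁵`. -/
def mulE513 {F : Type*} [Field F] : (Fin 5 → F) → (Fin 5 → F) → (Fin 5 → F) :=
  fun x y => ![0, 0, x 0 * y 0 + x 1 * y 1, 0, x 2 * y 2 + x 3 * y 3]

/-- Multiplication of `E₅,₁₄ : e₁² = e₃ + e₅, e₂² = e₃, e₃² = e₄² = e₅` on `F⁵`. -/
def mulE514 {F : Type*} [Field F] : (Fin 5 → F) → (Fin 5 → F) → (Fin 5 → F) :=
  fun x y => ![0, 0, x 0 * y 0 + x 1 * y 1, 0, x 0 * y 0 + x 2 * y 2 + x 3 * y 3]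

set_option maxHeartbeats 1000000 in
/-- Over an algebraically closed field `F`, the 5-dimensional evolution
algebras `E₅,₁₃` and `E₅,₁₄` are not isomorphic. -/
theorem stmt15 {F : Type*} [Field F] [IsAlgClosed F] :
    ¬ ∃ σ : (Fin 5 → F) ≃ₗ[F] (Fin 5 → F),
        ∀ x y, σ (mulE513 x y) = mulE514 (σ x) (σ y) := by
  rintro ⟨σ, h⟩
  -- products of basis vectors in E₅,₁₃
  have m11 : mulE513 (![1,0,0,0,0] : Fin 5 → F) ![1,0,0,0,0] = ![0,0,1,0,0] := by
    funext i; fin_cases i <;> simp [mulE513]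
  have m22 : mulE513 (![0,1,0,0,0] : Fin 5 → F) ![0,1,0,0,0] = ![0,0,1,0,0] := by
    funext i; fin_cases i <;> simp [mulE513]
  have m33 : mulE513 (![0,0,1,0,0] : Fin 5 → F) ![0,0,1,0,0] = ![0,0,0,0,1] := by
    funext i; fin_cases i <;> simp [mulE513]
  have m44 : mulE513 (![0,0,0,1,0] : Fin 5 → F) ![0,0,0,1,0] = ![0,0,0,0,1] := by
    funext i; fin_cases i <;> simp [mulE513]
  have m12 : mulE513 (![1,0,0,0,0] : Fin 5 → F) ![0,1,0,0,0] = 0 := by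
    funext i; fin_cases i <;> simp [mulE513]
  have m14 : mulE513 (![1,0,0,0,0] : Fin 5 → F) ![0,0,0,1,0] = 0 := by
    funext i; fin_cases i <;> simp [mulE513]
  have m24 : mulE513 (![0,1,0,0,0] : Fin 5 → F) ![0,0,0,1,0] = 0 := by
    funext i; fin_cases i <;> simp [mulE513]
  have m13 : mulE513 (![1,0,0,0,0] : Fin 5 → F) ![0,0,1,0,0] = 0 := by
    funext i; fin_cases i <;> simp [mulE513]
  have m23 : mulE513 (![0,1,0,0,0] : Fin 5 → F) ![0,0,1,0,0] = 0 := by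
    funext i; fin_cases i <;> simp [mulE513]
  have m43 : mulE513 (![0,0,0,1,0] : Fin 5 → F) ![0,0,1,0,0] = 0 := by
    funext i; fin_cases i <;> simp [mulE513]
  have h11 := h ![1,0,0,0,0] ![1,0,0,0,0]; rw [m11] at h11
  have h22 := h ![0,1,0,0,0] ![0,1,0,0,0]; rw [m22] at h22
  have h33 := h ![0,0,1,0,0] ![0,0,1,0,0]; rw [m33] at h33
  have h44 := h ![0,0,0,1,0] ![0,0,0,1,0]; rw [m44] at h44
  have h12 := h ![1,0,0,0,0] ![0,1,0,0,0]; rw [m12, map_zero] at h12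
  have h14 := h ![1,0,0,0,0] ![0,0,0,1,0]; rw [m14, map_zero] at h14
  have h24 := h ![0,1,0,0,0] ![0,0,0,1,0]; rw [m24, map_zero] at h24
  have h13 := h ![1,0,0,0,0] ![0,0,1,0,0]; rw [m13, map_zero] at h13
  have h23 := h ![0,1,0,0,0] ![0,0,1,0,0]; rw [m23, map_zero] at h23
  have h43 := h ![0,0,0,1,0] ![0,0,1,0,0]; rw [m43, map_zero] at h43
  set u : Fin 5 → F := σ ![1,0,0,0,0] with hu
  set v : Fin 5 → F := σ ![0,1,0,0,0] with hv
  set w : Fin 5 → F := σ ![0,0,0,1,0] with hw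
  set t : Fin 5 → F := σ ![0,0,1,0,0] with htd
  set s : Fin 5 → F := σ ![0,0,0,0,1] with hsd
  set α : F := t 2 with hαd
  set β : F := t 4 with hβd
  -- components of t = σ e₃ (from e₁² = e₃)
  have ht0 : t 0 = 0 := by simpa [mulE514] using congrFun h11 0
  have ht1 : t 1 = 0 := by simpa [mulE514] using congrFun h11 1
  have ht3 : t 3 = 0 := by simpa [mulE514] using congrFun h11 3
  have P1 : u 0 * u 0 + u 1 * u 1 = α := by
    have := congrFun h11 2; simp [mulE514] at this; linear_combination -this
  have P2raw : u 0 * u 0 + u 2 * u 2 + u 3 * u 3 = β := by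
    have := congrFun h11 4; simp [mulE514] at this; linear_combination -this
  have Q1 : v 0 * v 0 + v 1 * v 1 = α := by
    have := congrFun h22 2; simp [mulE514] at this; linear_combination -this
  have Q2raw : v 0 * v 0 + v 2 * v 2 + v 3 * v 3 = β := by
    have := congrFun h22 4; simp [mulE514] at this; linear_combination -this
  -- components of s = σ e₅ (from e₃² = e₅)
  have hs2 : s 2 = 0 := by
    have := congrFun h33 2; simp [mulE514, ht0, ht1] at this; exact this
  have hs4 : s 4 = α * α := by
    have := congrFun h33 4; simp [mulE514, ht0, ht3] at this
    linear_combination this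
  have hs0 : s 0 = 0 := by simpa [mulE514] using congrFun h33 0
  have hs1 : s 1 = 0 := by simpa [mulE514] using congrFun h33 1
  have hs3 : s 3 = 0 := by simpa [mulE514] using congrFun h33 3
  -- α ≠ 0, since σ e₅ ≠ 0
  have hα : α ≠ 0 := by
    intro h0
    have hs : s = 0 := by
      funext i; fin_cases i
      · exact hs0
      · exact hs1
      · exact hs2
      · exact hs3
      · show s 4 = 0; rw [hs4, h0]; ring
    have : (![0,0,0,0,1] : Fin 5 → F) = 0 := σ.map_eq_zero_iff.mp (by rw [← hsd, hs])
    have := congrFun this 4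
    simp at this
  -- e₁·e₃ = e₂·e₃ = e₄·e₃ = 0 give u 2 = v 2 = w 2 = 0
  have hu2 : u 2 = 0 := by
    have := congrFun h13 4
    simp [mulE514, ht0, ht3] at this
    rcases this with h' | h'
    · exact h'
    · exact absurd h' hα
  have hv2 : v 2 = 0 := by
    have := congrFun h23 4
    simp [mulE514, ht0, ht3] at this
    rcases this with h' | h'
    · exact h'
    · exact absurd h' hα
  have hw2 : w 2 = 0 := by
    have := congrFun h43 4
    simp [mulE514, ht0, ht3] at this
    rcases this with h' | h'
    · exact h'
    · exact absurd h' hα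
  have P2 : u 0 * u 0 + u 3 * u 3 = β := by rw [hu2] at P2raw; linear_combination P2raw
  have Q2 : v 0 * v 0 + v 3 * v 3 = β := by rw [hv2] at Q2raw; linear_combination Q2raw
  -- components of s from e₄² = e₅
  have R1 : w 0 * w 0 + w 1 * w 1 = 0 := by
    have := congrFun h44 2; simp [mulE514] at this; rw [← this, hs2]
  have R2 : w 0 * w 0 + w 3 * w 3 = α * α := by
    have := congrFun h44 4; simp [mulE514, hw2] at this
    rw [← hs4]; linear_combination -this
  -- orthogonality relations
  have O12a : u 0 * v 0 + u 1 * v 1 = 0 := by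
    have := congrFun h12 2; simp [mulE514] at this; linear_combination -this
  have O12b : u 0 * v 0 + u 3 * v 3 = 0 := by
    have := congrFun h12 4; simp [mulE514, hu2] at this; linear_combination -this
  have O13a : u 0 * w 0 + u 1 * w 1 = 0 := by
    have := congrFun h14 2; simp [mulE514] at this; linear_combination -this
  have O13b : u 0 * w 0 + u 3 * w 3 = 0 := by
    have := congrFun h14 4; simp [mulE514, hu2] at this; linear_combination -this
  have O23a : v 0 * w 0 + v 1 * w 1 = 0 := by
    have := congrFun h24 2; simp [mulE514] at this; linear_combination -this
  have O23b : v 0 * w 0 + v 3 * w 3 = 0 := by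
    have := congrFun h24 4; simp [mulE514, hv2] at this; linear_combination -this
  -- the pencil-of-forms determinant argument
  set M : Matrix (Fin 3) (Fin 3) F := !![u 0, u 1, u 3; v 0, v 1, v 3; w 0, w 1, w 3] with hM
  have key : ∀ D : Matrix (Fin 3) (Fin 3) F, D.det = 0 → (M * D * M.transpose).det = 0 := by
    intro D hD
    rw [Matrix.det_mul, Matrix.det_mul, hD]; ring
  -- first degenerate member of the pencil : x₀y₀ + x₃y₃
  have G1 : M * !![(1:F),0,0;0,0,0;0,0,1] * M.transpose = !![β,0,0; 0,β,0; 0,0,α*α] := by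
    ext x y
    fin_cases x <;> fin_cases y <;>
      simp [hM, Matrix.mul_apply, Matrix.transpose_apply, Matrix.vecHead, Matrix.vecTail,
        Fin.sum_univ_three] <;>
      first
        | linear_combination P2
        | linear_combination Q2
        | linear_combination R2
        | linear_combination O12b
        | linear_combination O13b
        | linear_combination O23b
  have key1 : β * β * (α * α) = 0 := by
    have := key !![(1:F),0,0;0,0,0;0,0,1] (by simp [Matrix.det_fin_three])
    rw [G1] at this
    simpa [Matrix.det_fin_three] using this
  -- second degenerate member of the pencil : -x₁y₁ + x₃y₃
  have G2 : M * !![(0:F),0,0;0,-1,0;0,0,1] * M.transpose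
      = !![β - α,0,0; 0,β - α,0; 0,0,α*α] := by
    ext x y
    fin_cases x <;> fin_cases y <;>
      simp [hM, Matrix.mul_apply, Matrix.transpose_apply, Matrix.vecHead, Matrix.vecTail,
        Fin.sum_univ_three] <;>
      first
        | linear_combination P2 - P1
        | linear_combination Q2 - Q1
        | linear_combination R2 - R1
        | linear_combination O12b - O12a
        | linear_combination O13b - O13a
        | linear_combination O23b - O23a
  have key2 : (β - α) * (β - α) * (α * α) = 0 := by
    have := key !![(0:F),0,0;0,-1,0;0,0,1] (by simp [Matrix.det_fin_three])
    rw [G2] at this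
    simpa [Matrix.det_fin_three] using this
  -- conclude
  have hαα : α * α ≠ 0 := mul_ne_zero hα hα
  have hβ : β = 0 := by
    rcases mul_eq_zero.mp key1 with h' | h'
    · rcases mul_eq_zero.mp h' with h'' | h'' <;> exact h''
    · exact absurd h' hαα
  have : β - α = 0 := by
    rcases mul_eq_zero.mp key2 with h' | h'
    · rcases mul_eq_zero.mp h' with h'' | h'' <;> exact h''
    · exact absurd h' hαα
  apply hα
  rw [hβ] at this
  linear_combination -this
end
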